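/- For every joint probability distribution P on X_1 × X_2 with marginals P_1, P_2, set λ_1 = P(0,0), λ_2 = 1 − P_1(0) − P_2(0) + P(0,0), λ_3 = P_2(0) − P(0,0), and λ_4 = P_1(0) − P(0,0). Then λ_1, λ_2, λ_3, λ_4 ≥ 0, λ_1 + λ_2 + λ_3 + λ_4 = 1, and the rate pair (I_P(X_1;Y_2|X_2), I_P(X_2;Y_1|X_1)) is componentwise upper-bounded by λ_1·(0,0) + λ_2·(C_{1,1}, C_{2,1}) + λ_3·(C_{1,0}, 0) + λ_4·(0, C_{2,0}). In particular, every such rate pair is componentwise dominated by a point of the convex hull in ℝ² of the four points (0,0), (C_{1,1}, C_{2,1}), (C_{1,0}, 0), (0, C_{2,0}). -/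

import Mathlib

open Real BigOperators Finset

/-- Entropy of a finite probability vector, with the convention `0 * log 0 = 0`
(automatic since `Real.log 0 = 0`). -/
noncomputable def ent {n : ℕ} (p : Fin n → ℝ) : ℝ := -∑ y, p y * Real.log (p y)

/-- `Q` is a probability distribution on `Fin n`. -/
def IsProbDist {n : ℕ} (Q : Fin n → ℝ) : Prop := (∀ x, 0 ≤ Q x) ∧ ∑ x, Q x = 1

/-- `P` is a joint probability distribution. -/
def IsJointProbDist {m n : ℕ} (P : Fin m → Fin n → ℝ) : Prop :=
  (∀ x1 x2, 0 ≤ P x1 x2) ∧ ∑ x1, ∑ x2, P x1 x2 = 1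

/-- First marginal `P_1`. -/
noncomputable def marg1 {m n : ℕ} (P : Fin m → Fin n → ℝ) (x1 : Fin m) : ℝ := ∑ x2, P x1 x2

/-- Second marginal `P_2`. -/
noncomputable def marg2 {m n : ℕ} (P : Fin m → Fin n → ℝ) (x2 : Fin n) : ℝ := ∑ x1, P x1 x2

/-- Conditional mutual information `I_P(X₁;Y₂|X₂)`; terms with
`P x1 x2 * W2 x1 x2 y2 = 0` vanish, and summands with `marg2 P x2 = 0` vanish
since then `P x1 x2 = 0`. -/
noncomputable def condMI1 {m n t : ℕ} (P : Fin m → Fin n → ℝ)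
    (W2 : Fin m → Fin n → Fin t → ℝ) : ℝ :=
  ∑ x2, ∑ x1, ∑ y2, P x1 x2 * W2 x1 x2 y2 *
    Real.log (W2 x1 x2 y2 / ((∑ x1', P x1' x2 * W2 x1' x2 y2) / marg2 P x2))

/-- Conditional mutual information `I_P(X₂;Y₁|X₁)`. -/
noncomputable def condMI2 {m n t : ℕ} (P : Fin m → Fin n → ℝ)
    (W1 : Fin m → Fin n → Fin t → ℝ) : ℝ :=
  ∑ x1, ∑ x2, ∑ y1, P x1 x2 * W1 x1 x2 y1 *
    Real.log (W1 x1 x2 y1 / ((∑ x2', P x1 x2' * W1 x1 x2' y1) / marg1 P x1))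

/-- Structural assumptions of a generalized push-to-talk two-way channel with
input alphabets `Fin (r1+3)`, `Fin (r2+3)` and output alphabets `Fin (s1+2)`,
`Fin (s2+2)`: both marginal channels are transition matrices; the row of
input `0` of each user is uniform; for each state, the nonzero-input rows are
permutations of the row of input `1` and have constant column sums
(weak symmetry). -/
def GenPTT {r1 r2 s1 s2 : ℕ} (W1 : Fin (r1 + 3) → Fin (r2 + 3) → Fin (s1 + 2) → ℝ)
    (W2 : Fin (r1 + 3) → Fin (r2 + 3) → Fin (s2 + 2) → ℝ) : Prop :=
  (∀ x1 x2 y1, 0 ≤ W1 x1 x2 y1) ∧ (∀ x1 x2 y2, 0 ≤ W2 x1 x2 y2) ∧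
  (∀ x1 x2, ∑ y1, W1 x1 x2 y1 = 1) ∧ (∀ x1 x2, ∑ y2, W2 x1 x2 y2 = 1) ∧
  (∀ x2 y2, W2 0 x2 y2 = 1 / ((s2 : ℝ) + 2)) ∧
  (∀ x2, ∀ x1 : Fin (r1 + 3), x1 ≠ 0 →
    ∃ σ : Equiv.Perm (Fin (s2 + 2)), ∀ y2, W2 x1 x2 y2 = W2 1 x2 (σ y2)) ∧
  (∀ x2, ∀ y2 y2' : Fin (s2 + 2),
    ∑ x1 ∈ Finset.univ.filter (fun x1 => x1 ≠ (0 : Fin (r1 + 3))), W2 x1 x2 y2 =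
    ∑ x1 ∈ Finset.univ.filter (fun x1 => x1 ≠ (0 : Fin (r1 + 3))), W2 x1 x2 y2') ∧
  (∀ x1 y1, W1 x1 0 y1 = 1 / ((s1 : ℝ) + 2)) ∧
  (∀ x1, ∀ x2 : Fin (r2 + 3), x2 ≠ 0 →
    ∃ σ : Equiv.Perm (Fin (s1 + 2)), ∀ y1, W1 x1 x2 y1 = W1 x1 1 (σ y1)) ∧
  (∀ x1, ∀ y1 y1' : Fin (s1 + 2),
    ∑ x2 ∈ Finset.univ.filter (fun x2 => x2 ≠ (0 : Fin (r2 + 3))), W1 x1 x2 y1 =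
    ∑ x2 ∈ Finset.univ.filter (fun x2 => x2 ≠ (0 : Fin (r2 + 3))), W1 x1 x2 y1')

/-- `C_{1,x₂} = log s₂ − H(row of input 1 of Q_{1,x₂})`. -/
noncomputable def C1 {r1 r2 s2 : ℕ} (W2 : Fin (r1 + 3) → Fin (r2 + 3) → Fin (s2 + 2) → ℝ)
    (x2 : Fin (r2 + 3)) : ℝ := Real.log ((s2 : ℝ) + 2) - ent (fun y2 => W2 1 x2 y2)

/-- `C_{2,x₁} = log s₁ − H(row of input 1 of Q_{2,x₁})`. -/
noncomputable def C2 {r1 r2 s1 : ℕ} (W1 : Fin (r1 + 3) → Fin (r2 + 3) → Fin (s1 + 2) → ℝ)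
    (x1 : Fin (r1 + 3)) : ℝ := Real.log ((s1 : ℝ) + 2) - ent (fun y1 => W1 x1 1 y1)

/-- The channel symmetry property: `C_{1,x₂} = C_{1,1}` for all `x₂ ≠ 0` and
`C_{2,x₁} = C_{2,1}` for all `x₁ ≠ 0`. -/
def SymProp {r1 r2 s1 s2 : ℕ} (W1 : Fin (r1 + 3) → Fin (r2 + 3) → Fin (s1 + 2) → ℝ)
    (W2 : Fin (r1 + 3) → Fin (r2 + 3) → Fin (s2 + 2) → ℝ) : Prop :=
  (∀ x2 : Fin (r2 + 3), x2 ≠ 0 → C1 W2 x2 = C1 W2 1) ∧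
  (∀ x1 : Fin (r1 + 3), x1 ≠ 0 → C2 W1 x1 = C2 W1 1)



lemma log_ge_one_sub_inv {x : ℝ} (hx : 0 < x) : 1 - x⁻¹ ≤ Real.log x := by
  have h := Real.log_le_sub_one_of_pos (inv_pos.mpr hx)
  rw [Real.log_inv] at h
  linarith

lemma gibbs {t : ℕ} (ht : 0 < t) (Q : Fin t → ℝ) (hQ : ∀ y, 0 ≤ Q y)
    (c : ℝ) (hc : ∑ y, Q y = c) :
    -(c * Real.log t) ≤ ∑ y, Q y * Real.log (Q y / c) := by
  have hc0 : 0 ≤ c := hc ▸ Finset.sum_nonneg fun y _ => hQ y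
  rcases eq_or_lt_of_le hc0 with h0 | hpos
  · have hz : ∀ y, Q y = 0 := fun y =>
      (Finset.sum_eq_zero_iff_of_nonneg (fun y _ => hQ y)).mp (hc.trans h0.symm) y (Finset.mem_univ y)
    simp [← h0, hz]
  · have ht' : (0:ℝ) < t := by exact_mod_cast ht
    have key : ∀ y, Q y - c / t ≤ Q y * Real.log (Q y / c) + Q y * Real.log t := by
      intro y
      rcases eq_or_lt_of_le (hQ y) with h0 | hq
      · rw [← h0]; simp; positivity
      · have hx : 0 < Q y * t / c := by positivity
        have hl := log_ge_one_sub_inv hx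
        have hlog : Real.log (Q y * t / c) = Real.log (Q y / c) + Real.log t := by
          rw [show Q y * t / c = (Q y / c) * t by ring,
            Real.log_mul (by positivity) (by positivity)]
        have h2 : Q y * (1 - (Q y * t / c)⁻¹) ≤ Q y * Real.log (Q y * t / c) :=
          mul_le_mul_of_nonneg_left hl (le_of_lt hq)
        have h3 : Q y * (1 - (Q y * t / c)⁻¹) = Q y - c / t := by
          field_simp
        rw [h3, hlog, mul_add] at h2
        exact h2
    have hsum : ∑ y, (Q y - c / t) ≤ ∑ y, (Q y * Real.log (Q y / c) + Q y * Real.log t) :=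
      Finset.sum_le_sum (fun y _ => key y)
    have hL : ∑ y, (Q y - c / t) = 0 := by
      rw [Finset.sum_sub_distrib, hc, Finset.sum_const, Finset.card_univ, Fintype.card_fin,
        nsmul_eq_mul]
      field_simp
      ring
    have hR : ∑ y, (Q y * Real.log (Q y / c) + Q y * Real.log t)
        = (∑ y, Q y * Real.log (Q y / c)) + c * Real.log t := by
      rw [Finset.sum_add_distrib, ← Finset.sum_mul, hc]
    rw [hL, hR] at hsum
    linarith

lemma main_bound {m n t : ℕ} [NeZero m] (ht : 0 < t)
    (P : Fin m → Fin n → ℝ) (hPnn : ∀ a b, 0 ≤ P a b)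
    (W : Fin m → Fin n → Fin t → ℝ) (hWnn : ∀ a b y, 0 ≤ W a b y)
    (hWsum : ∀ a b, ∑ y, W a b y = 1)
    (hW0 : ∀ b y, W 0 b y = 1 / t)
    (hperm : ∀ b (a : Fin m), a ≠ 0 →
      ∑ y, W a b y * Real.log (W a b y) = ∑ y, W 1 b y * Real.log (W 1 b y)) :
    ∑ b, ∑ a, ∑ y, P a b * W a b y *
        Real.log (W a b y / ((∑ a', P a' b * W a' b y) / (∑ a', P a' b)))
      ≤ ∑ b, ((∑ a, P a b) - P 0 b) * (Real.log t - ent (fun y => W 1 b y)) := by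
  have ht' : (0:ℝ) < t := by exact_mod_cast ht
  apply Finset.sum_le_sum
  intro b _
  set S : ℝ := ∑ a', P a' b with hS
  set Q : Fin t → ℝ := fun y => ∑ a', P a' b * W a' b y with hQdef
  have hQnn : ∀ y, 0 ≤ Q y := fun y => Finset.sum_nonneg fun a _ =>
    mul_nonneg (hPnn a b) (hWnn a b y)
  have hQsum : ∑ y, Q y = S := by
    rw [hQdef, hS]
    rw [Finset.sum_comm]
    simp only [← Finset.mul_sum, hWsum, mul_one]
  have hsplit : ∀ a y, P a b * W a b y * Real.log (W a b y / (Q y / S))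
      = P a b * W a b y * Real.log (W a b y) - P a b * W a b y * Real.log (Q y / S) := by
    intro a y
    rcases eq_or_lt_of_le (mul_nonneg (hPnn a b) (hWnn a b y)) with h0 | hpos
    · rw [← h0]; ring
    · have hP : 0 < P a b := lt_of_le_of_ne (hPnn a b)
        (fun h => by rw [← h, zero_mul] at hpos; exact lt_irrefl _ hpos)
      have hW : 0 < W a b y := lt_of_le_of_ne (hWnn a b y)
        (fun h => by rw [← h, mul_zero] at hpos; exact lt_irrefl _ hpos)
      have hQy : 0 < Q y := lt_of_lt_of_le hpos
        (Finset.single_le_sum (fun a' _ => mul_nonneg (hPnn a' b) (hWnn a' b y))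
          (Finset.mem_univ a))
      have hSp : 0 < S := lt_of_lt_of_le hP
        (Finset.single_le_sum (fun a' _ => hPnn a' b) (Finset.mem_univ a))
      rw [Real.log_div hW.ne' (div_pos hQy hSp).ne']
      ring
  have hsecond : ∑ a, ∑ y, P a b * W a b y * Real.log (Q y / S)
      = ∑ y, Q y * Real.log (Q y / S) := by
    rw [Finset.sum_comm]
    exact Finset.sum_congr rfl fun y _ => (Finset.sum_mul _ _ _).symm
  have hfirst : ∑ a, ∑ y, P a b * W a b y * Real.log (W a b y)
      = P 0 b * (-(Real.log t))
        + (S - P 0 b) * (-(ent (fun y => W 1 b y))) := by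
    have hrow : ∀ a : Fin m, ∑ y, P a b * W a b y * Real.log (W a b y)
        = P a b * ∑ y, W a b y * Real.log (W a b y) := by
      intro a
      rw [Finset.mul_sum]
      exact Finset.sum_congr rfl fun y _ => by ring
    simp only [hrow]
    rw [← Finset.add_sum_erase _ _ (Finset.mem_univ (0 : Fin m))]
    have h0row : ∑ y, W 0 b y * Real.log (W 0 b y) = -(Real.log t) := by
      simp only [hW0 b]
      rw [Finset.sum_const, Finset.card_univ, Fintype.card_fin, nsmul_eq_mul,
        one_div, Real.log_inv]
      field_simp
    have herase : ∀ a ∈ Finset.univ.erase (0 : Fin m),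
        P a b * ∑ y, W a b y * Real.log (W a b y)
        = P a b * (-(ent (fun y => W 1 b y))) := by
      intro a ha
      rw [hperm b a (Finset.mem_erase.mp ha).1]
      simp [ent]
    rw [Finset.sum_congr rfl herase, ← Finset.sum_mul, h0row]
    have : ∑ a ∈ Finset.univ.erase (0 : Fin m), P a b = S - P 0 b := by
      have := Finset.add_sum_erase Finset.univ (fun a => P a b) (Finset.mem_univ (0 : Fin m))
      rw [hS]
      linarith
    rw [this]
  have hg := gibbs ht Q hQnn S hQsum
  calc ∑ a, ∑ y, P a b * W a b y * Real.log (W a b y / (Q y / S))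
      = (∑ a, ∑ y, P a b * W a b y * Real.log (W a b y))
        - ∑ y, Q y * Real.log (Q y / S) := by
        simp only [hsplit, Finset.sum_sub_distrib]
        rw [hsecond]
    _ ≤ (P 0 b * (-(Real.log t)) + (S - P 0 b) * (-(ent (fun y => W 1 b y))))
        + S * Real.log t := by rw [hfirst]; linarith
    _ = (S - P 0 b) * (Real.log t - ent (fun y => W 1 b y)) := by ring

/-- The rate pair of any joint input distribution is componentwise dominated by
the convex combination `λ₁(0,0) + λ₂(C₁₁,C₂₁) + λ₃(C₁₀,0) + λ₄(0,C₂₀)`, hence by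
a point of the convex hull of the four rate pairs. -/
theorem stmt11 (r1 r2 s1 s2 : ℕ)
    (W1 : Fin (r1 + 3) → Fin (r2 + 3) → Fin (s1 + 2) → ℝ)
    (W2 : Fin (r1 + 3) → Fin (r2 + 3) → Fin (s2 + 2) → ℝ)
    (hW : GenPTT W1 W2) (hSym : SymProp W1 W2)
    (P : Fin (r1 + 3) → Fin (r2 + 3) → ℝ) (hP : IsJointProbDist P) :
    0 ≤ P 0 0 ∧
    0 ≤ 1 - marg1 P 0 - marg2 P 0 + P 0 0 ∧
    0 ≤ marg2 P 0 - P 0 0 ∧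
    0 ≤ marg1 P 0 - P 0 0 ∧
    P 0 0 + (1 - marg1 P 0 - marg2 P 0 + P 0 0) + (marg2 P 0 - P 0 0) +
      (marg1 P 0 - P 0 0) = 1 ∧
    condMI1 P W2 ≤ (1 - marg1 P 0 - marg2 P 0 + P 0 0) * C1 W2 1 +
      (marg2 P 0 - P 0 0) * C1 W2 0 ∧
    condMI2 P W1 ≤ (1 - marg1 P 0 - marg2 P 0 + P 0 0) * C2 W1 1 +
      (marg1 P 0 - P 0 0) * C2 W1 0 ∧
    ∃ p ∈ convexHull ℝ ({((0 : ℝ), (0 : ℝ)), (C1 W2 1, C2 W1 1),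
        (C1 W2 0, (0 : ℝ)), ((0 : ℝ), C2 W1 0)} : Set (ℝ × ℝ)),
      condMI1 P W2 ≤ p.1 ∧ condMI2 P W1 ≤ p.2 := by
  obtain ⟨hPnn, hPsum⟩ := hP
  obtain ⟨hW1nn, hW2nn, hW1sum, hW2sum, hW2unif, hW2perm, _, hW1unif, hW1perm, _⟩ := hW
  -- basic sum facts
  have hm2 : ∀ x2, marg2 P x2 = ∑ x1, P x1 x2 := fun _ => rfl
  have hm1 : ∀ x1, marg1 P x1 = ∑ x2, P x1 x2 := fun _ => rfl
  have k3 : ∑ x2, P 0 x2 = P 0 0 + ∑ x2 ∈ Finset.univ.erase 0, P 0 x2 :=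
    (Finset.add_sum_erase _ _ (Finset.mem_univ 0)).symm
  have k4 : ∑ x1, P x1 0 = P 0 0 + ∑ x1 ∈ Finset.univ.erase 0, P x1 0 :=
    (Finset.add_sum_erase _ _ (Finset.mem_univ 0)).symm
  have k1 : ∑ x1, ∑ x2, P x1 x2 = (∑ x1, P x1 0) + ∑ x1, ∑ x2 ∈ Finset.univ.erase 0, P x1 x2 := by
    rw [← Finset.sum_add_distrib]
    exact Finset.sum_congr rfl fun x1 _ => (Finset.add_sum_erase _ _ (Finset.mem_univ 0)).symm
  have k2 : ∑ x1, ∑ x2 ∈ Finset.univ.erase 0, P x1 x2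
      = (∑ x2 ∈ Finset.univ.erase 0, P 0 x2)
        + ∑ x1 ∈ Finset.univ.erase 0, ∑ x2 ∈ Finset.univ.erase 0, P x1 x2 :=
    (Finset.add_sum_erase _ _ (Finset.mem_univ 0)).symm
  have hTnn : 0 ≤ ∑ x1 ∈ Finset.univ.erase (0 : Fin (r1+3)),
      ∑ x2 ∈ Finset.univ.erase (0 : Fin (r2+3)), P x1 x2 :=
    Finset.sum_nonneg fun x1 _ => Finset.sum_nonneg fun x2 _ => hPnn x1 x2
  have hl2 : 1 - marg1 P 0 - marg2 P 0 + P 0 0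
      = ∑ x1 ∈ Finset.univ.erase (0 : Fin (r1+3)),
        ∑ x2 ∈ Finset.univ.erase (0 : Fin (r2+3)), P x1 x2 := by
    rw [hm1, hm2]
    linarith [hPsum, k1, k2, k3]
  have hl3 : 0 ≤ marg2 P 0 - P 0 0 := by
    rw [hm2]
    have : 0 ≤ ∑ x1 ∈ Finset.univ.erase (0 : Fin (r1+3)), P x1 0 :=
      Finset.sum_nonneg fun x1 _ => hPnn x1 0
    linarith [k4]
  have hl4 : 0 ≤ marg1 P 0 - P 0 0 := by
    rw [hm1]
    have : 0 ≤ ∑ x2 ∈ Finset.univ.erase (0 : Fin (r2+3)), P 0 x2 :=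
      Finset.sum_nonneg fun x2 _ => hPnn 0 x2
    linarith [k3]
  have hmargsum2 : ∑ x2, marg2 P x2 = 1 := by
    simp only [marg2]; rw [Finset.sum_comm]; exact hPsum
  have hmargsum1 : ∑ x1, marg1 P x1 = 1 := hPsum
  -- bound on condMI1
  have hb1 : condMI1 P W2 ≤ (1 - marg1 P 0 - marg2 P 0 + P 0 0) * C1 W2 1 +
      (marg2 P 0 - P 0 0) * C1 W2 0 := by
    have hcast : ((s2 + 2 : ℕ) : ℝ) = (s2 : ℝ) + 2 := by push_cast; ring
    have hmb := main_bound (m := r1+3) (n := r2+3) (t := s2+2) (by omega) P hPnn W2 hW2nn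
      hW2sum
      (fun b y => by rw [hW2unif b y, hcast])
      (fun b a ha => by
        obtain ⟨σ, hσ⟩ := hW2perm b a ha
        simp only [hσ]
        exact Equiv.sum_comp σ (fun y => W2 1 b y * Real.log (W2 1 b y)))
    have heq : condMI1 P W2 = ∑ b, ∑ a, ∑ y, P a b * W2 a b y *
        Real.log (W2 a b y / ((∑ a', P a' b * W2 a' b y) / (∑ a', P a' b))) := rfl
    rw [heq]
    refine le_trans hmb (le_of_eq ?_)
    have hrw : ∀ b : Fin (r2+3), ((∑ a, P a b) - P 0 b) *
        (Real.log ((s2+2 : ℕ) : ℝ) - ent (fun y => W2 1 b y))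
        = (marg2 P b - P 0 b) * C1 W2 b := by
      intro b
      rw [hm2, C1, hcast]
    rw [Finset.sum_congr rfl fun b _ => hrw b]
    rw [← Finset.add_sum_erase _ _ (Finset.mem_univ (0 : Fin (r2+3)))]
    have hC : ∀ b ∈ Finset.univ.erase (0 : Fin (r2+3)),
        (marg2 P b - P 0 b) * C1 W2 b = (marg2 P b - P 0 b) * C1 W2 1 := by
      intro b hb
      rw [hSym.1 b (Finset.mem_erase.mp hb).1]
    rw [Finset.sum_congr rfl hC, ← Finset.sum_mul]
    have hsg : ∑ b ∈ Finset.univ.erase (0 : Fin (r2+3)), (marg2 P b - P 0 b)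
        = 1 - marg1 P 0 - marg2 P 0 + P 0 0 := by
      rw [Finset.sum_sub_distrib]
      have e1 : ∑ b ∈ Finset.univ.erase (0 : Fin (r2+3)), marg2 P b = 1 - marg2 P 0 := by
        have := Finset.add_sum_erase Finset.univ (marg2 P) (Finset.mem_univ (0 : Fin (r2+3)))
        linarith [hmargsum2]
      have e2 : ∑ b ∈ Finset.univ.erase (0 : Fin (r2+3)), P 0 b = marg1 P 0 - P 0 0 := by
        rw [hm1]; linarith [k3]
      rw [e1, e2]; ring
    rw [hsg]; ring
  -- bound on condMI2
  have hb2 : condMI2 P W1 ≤ (1 - marg1 P 0 - marg2 P 0 + P 0 0) * C2 W1 1 +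
      (marg1 P 0 - P 0 0) * C2 W1 0 := by
    have hcast : ((s1 + 2 : ℕ) : ℝ) = (s1 : ℝ) + 2 := by push_cast; ring
    have hmb := main_bound (m := r2+3) (n := r1+3) (t := s1+2) (by omega)
      (fun a b => P b a) (fun a b => hPnn b a)
      (fun a b y => W1 b a y) (fun a b y => hW1nn b a y)
      (fun a b => hW1sum b a)
      (fun b y => by show W1 b 0 y = _; rw [hW1unif b y, hcast])
      (fun b a ha => by
        show ∑ y, W1 b a y * Real.log (W1 b a y) = ∑ y, W1 b 1 y * Real.log (W1 b 1 y)
        obtain ⟨σ, hσ⟩ := hW1perm b a ha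
        simp only [hσ]
        exact Equiv.sum_comp σ (fun y => W1 b 1 y * Real.log (W1 b 1 y)))
    have heq : condMI2 P W1 = ∑ b, ∑ a, ∑ y, P b a * W1 b a y *
        Real.log (W1 b a y / ((∑ a', P b a' * W1 b a' y) / (∑ a', P b a'))) := rfl
    rw [heq]
    refine le_trans hmb (le_of_eq ?_)
    have hrw : ∀ b : Fin (r1+3), ((∑ a, P b a) - P b 0) *
        (Real.log ((s1+2 : ℕ) : ℝ) - ent (fun y => W1 b 1 y))
        = (marg1 P b - P b 0) * C2 W1 b := by
      intro b
      rw [hm1, C2, hcast]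
    rw [Finset.sum_congr rfl fun b _ => hrw b]
    rw [← Finset.add_sum_erase _ _ (Finset.mem_univ (0 : Fin (r1+3)))]
    have hC : ∀ b ∈ Finset.univ.erase (0 : Fin (r1+3)),
        (marg1 P b - P b 0) * C2 W1 b = (marg1 P b - P b 0) * C2 W1 1 := by
      intro b hb
      rw [hSym.2 b (Finset.mem_erase.mp hb).1]
    rw [Finset.sum_congr rfl hC, ← Finset.sum_mul]
    have hsg : ∑ b ∈ Finset.univ.erase (0 : Fin (r1+3)), (marg1 P b - P b 0)
        = 1 - marg1 P 0 - marg2 P 0 + P 0 0 := by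
      rw [Finset.sum_sub_distrib]
      have e1 : ∑ b ∈ Finset.univ.erase (0 : Fin (r1+3)), marg1 P b = 1 - marg1 P 0 := by
        have := Finset.add_sum_erase Finset.univ (marg1 P) (Finset.mem_univ (0 : Fin (r1+3)))
        linarith [hmargsum1]
      have e2 : ∑ b ∈ Finset.univ.erase (0 : Fin (r1+3)), P b 0 = marg2 P 0 - P 0 0 := by
        rw [hm2]; linarith [k4]
      rw [e1, e2]; ring
    rw [hsg]; ring
  refine ⟨hPnn 0 0, hl2 ▸ hTnn, hl3, hl4, by ring, hb1, hb2, ?_⟩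
  -- convex hull point
  set l1 : ℝ := P 0 0
  set l2 : ℝ := 1 - marg1 P 0 - marg2 P 0 + P 0 0
  set l3 : ℝ := marg2 P 0 - P 0 0
  set l4 : ℝ := marg1 P 0 - P 0 0
  have hl2' : 0 ≤ l2 := hl2 ▸ hTnn
  have hsum4 : l1 + l2 + l3 + l4 = 1 := by simp only [l1, l2, l3, l4]; ring
  set SS : Set (ℝ × ℝ) := ({((0 : ℝ), (0 : ℝ)), (C1 W2 1, C2 W1 1),
      (C1 W2 0, (0 : ℝ)), ((0 : ℝ), C2 W1 0)} : Set (ℝ × ℝ))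
  refine ⟨(l2 * C1 W2 1 + l3 * C1 W2 0, l2 * C2 W1 1 + l4 * C2 W1 0), ?_, le_of_le_of_eq hb1 rfl,
    le_of_le_of_eq hb2 rfl⟩
  have hmem : ∀ i : Fin 4, (![((0:ℝ),(0:ℝ)), (C1 W2 1, C2 W1 1), (C1 W2 0, (0:ℝ)),
      ((0:ℝ), C2 W1 0)] : Fin 4 → ℝ × ℝ) i ∈ convexHull ℝ SS := by
    intro i
    apply subset_convexHull
    fin_cases i <;> simp [SS]
  have := (convex_convexHull ℝ SS).sum_mem (t := Finset.univ)
    (w := ![l1, l2, l3, l4])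
    (z := ![((0:ℝ),(0:ℝ)), (C1 W2 1, C2 W1 1), (C1 W2 0, (0:ℝ)), ((0:ℝ), C2 W1 0)])
    (fun i _ => by fin_cases i <;> simpa using by first | exact hPnn 0 0 | exact hl2' | exact hl3 | exact hl4)
    (by simp [Fin.sum_univ_four]; linarith [hsum4])
    (fun i _ => hmem i)
  convert this using 1
  simp only [Fin.sum_univ_four]
  simp only [Matrix.cons_val_zero, Matrix.cons_val_one, Matrix.head_cons, Matrix.cons_val_two,
    Matrix.tail_cons, Matrix.cons_val_three, Prod.smul_mk, smul_eq_mul, Prod.mk_add_mk,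
    Prod.mk.injEq]
  constructor <;> ring
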